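/- For every set A of natural numbers, the set T(A) = {x₁, x₂, …} ∪ S(A) is a term clone of the variety V, viewed as a subset of the free algebra F: it contains all generators xᵢ, and it is closed under substitution, i.e., for every endomorphism φ : F → F (a map with φ(a * b) = φ(a) * φ(b), φ(0) = 0, φ(p) = p) such that φ(xᵢ) ∈ T(A) for all i, one has φ(t) ∈ T(A) for every t ∈ T(A). -/
import Mathlib


/-- Letters: `none` is the distinguished letter `p`, `some i` is the generator letter `xᵢ`. -/
abbrev Letter := Option ℕ

/-- The carrier of the free algebra: `0`, the letters, and the words
(pairs of a letter and a finite nonempty set of letters). -/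
inductive F : Type
  | zero : F
  | letter : Letter → F
  | word : Letter → {Y : Finset Letter // Y.Nonempty} → F

namespace F

/-- The binary operation `*` on `F`. -/
def mul : F → F → F
  | zero, _ => zero
  | _, zero => zero
  | _, word _ _ => zero
  | letter x, letter y => word x ⟨{y}, Finset.singleton_nonempty y⟩
  | word x Y, letter y =>
      if y ∈ Y.1 then zero
      else word x ⟨insert y Y.1, Finset.insert_nonempty y Y.1⟩

/-- The distinguished letter `p` as an element of `F`. -/
def p : F := letter none

/-- The generator letter `xᵢ` as an element of `F`. -/
def x (i : ℕ) : F := letter (some i)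

end F

/-- For a set `A` of natural numbers, `S A` consists of `0` together with all words whose
first component is the letter `p` and whose length (`|Y| + 1`) lies in `A`. -/
def S (A : Set ℕ) : Set F :=
  {f | f = F.zero ∨ ∃ Y : {Y : Finset Letter // Y.Nonempty},
    f = F.word none Y ∧ Y.1.card + 1 ∈ A}

lemma key (φ : F → F) (hm : ∀ a b, φ (F.mul a b) = F.mul (φ a) (φ b))
    (hp : φ F.p = F.p) :
    ∀ Y : Finset Letter, ∀ h : Y.Nonempty,
      φ (F.word none ⟨Y, h⟩) = F.zero ∨
      ∃ Z : Finset Letter, ∃ hZ : Z.Nonempty,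
        φ (F.word none ⟨Y, h⟩) = F.word none ⟨Z, hZ⟩ ∧ Z.card = Y.card := by
  intro Y
  induction Y using Finset.induction_on with
  | empty => intro h; simp at h
  | @insert a Y ha ih =>
    intro h
    rcases Finset.eq_empty_or_nonempty Y with rfl | hY
    · have e : F.word none ⟨insert a ∅, h⟩ = F.mul F.p (F.letter a) := by
        simp [F.mul, F.p]
      rw [e, hm, hp]
      cases hc : φ (F.letter a) with
      | zero => left; simp [F.mul, F.p]
      | letter b =>
        right
        exact ⟨{b}, Finset.singleton_nonempty b, by simp [F.mul, F.p], by simp⟩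
      | word c Z => left; simp [F.mul, F.p]
    · have e : F.word none ⟨insert a Y, h⟩ = F.mul (F.word none ⟨Y, hY⟩) (F.letter a) := by
        simp [F.mul, ha]
      rw [e, hm]
      rcases ih hY with h0 | ⟨Z, hZ, heq, hcard⟩
      · left; rw [h0]; cases φ (F.letter a) <;> rfl
      · rw [heq]
        cases hc : φ (F.letter a) with
        | zero => left; rfl
        | letter b =>
          by_cases hb : b ∈ Z
          · left; simp [F.mul, hb]
          · right
            refine ⟨insert b Z, Finset.insert_nonempty b Z, by simp [F.mul, hb], ?_⟩
            rw [Finset.card_insert_of_notMem hb, Finset.card_insert_of_notMem ha, hcard]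
        | word c W => left; rfl

/-- For every `A ⊆ ℕ`, the set `T A = {x₁, x₂, …} ∪ S A` is a term clone of `V`:
it contains all generators and is closed under substitution. -/

theorem stmt_8 (A : Set ℕ) :
    (∀ i : ℕ, F.x i ∈ Set.range F.x ∪ S A) ∧
    (∀ φ : F → F, (∀ a b : F, φ (F.mul a b) = F.mul (φ a) (φ b)) →
      φ F.zero = F.zero → φ F.p = F.p →
      (∀ i : ℕ, φ (F.x i) ∈ Set.range F.x ∪ S A) →
      ∀ t ∈ Set.range F.x ∪ S A, φ t ∈ Set.range F.x ∪ S A) := by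
  constructor
  · intro i; exact Or.inl ⟨i, rfl⟩
  · intro φ hm h0 hp h4 t ht
    rcases ht with ⟨i, rfl⟩ | hS
    · exact h4 i
    · rcases hS with rfl | ⟨⟨Y, hY⟩, rfl, hA⟩
      · right; left; exact h0
      · rcases key φ hm hp Y hY with hz | ⟨Z, hZ, heq, hcard⟩
        · right; left; exact hz
        · right; right
          exact ⟨⟨Z, hZ⟩, heq, by rw [hcard]; exact hA⟩
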